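/- For any hypergraph H and any family {A_i}_{i ∈ I} of open sub-hypergraphs of H, both the intersection ∩_{i∈I} A_i and the union ∪_{i∈I} A_i are open in H; consequently the open sub-hypergraphs of H form a topology on H. -/
import Mathlib


variable {V : Type}

/-- The associated simplicial complex `ΔK` of a hypergraph `K`: all nonempty subsets of
hyperedges of `K`. -/
def assocSC (K : Set (Finset V)) : Set (Finset V) :=
  {σ | σ.Nonempty ∧ ∃ τ ∈ K, σ ⊆ τ}

/-- The closed complement `H − A = {σ ∈ H : σ ⊆ τ for some τ ∈ H \ A}`. -/
def closedCompl (H A : Set (Finset V)) : Set (Finset V) :=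
  {σ ∈ H | ∃ τ ∈ H, τ ∉ A ∧ σ ⊆ τ}

/-- The boundary `bd(H, A) = A ∩ (H − A)`. -/
def bdH (H A : Set (Finset V)) : Set (Finset V) := A ∩ closedCompl H A

/-- The interior `int(H, A) = A \ bd(H, A)`. -/
def intH (H A : Set (Finset V)) : Set (Finset V) := A \ bdH H A

/-- The closure `cl(H, A) = H \ int(H, H \ A)`. -/
def clH (H A : Set (Finset V)) : Set (Finset V) := H \ intH H (H \ A)

/-- A sub-hypergraph `B` is open in `H` if its boundary in `H` is empty. -/
def IsOpenH (H B : Set (Finset V)) : Prop := bdH H B = ∅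

/-- A sub-hypergraph `B` is closed in `H` if `H \ B` is open in `H`. -/
def IsClosedH (H B : Set (Finset V)) : Prop := IsOpenH H (H \ B)

/-- `K` is an (abstract) simplicial complex: it is closed under taking nonempty subsets
of its hyperedges. -/
def IsSC (K : Set (Finset V)) : Prop :=
  ∀ σ ∈ K, ∀ τ : Finset V, τ ⊆ σ → τ.Nonempty → τ ∈ K

/-- Openness in the form used for the sub-hypergraph topology:
`B` is open in `H` iff `B ∩ Δ(H \ B) = ∅`. -/
def IsOpenD (H B : Set (Finset V)) : Prop := B ∩ assocSC (H \ B) = ∅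

/-- For any hypergraph `H` and any family `{A_i}` of open
sub-hypergraphs of `H`, both `⋂ i, A i` and `⋃ i, A i` are open in `H`; together with
the openness of `∅` and `H` this shows that the open sub-hypergraphs of `H` form a
topology on `H`. -/
theorem open_subhypergraphs_topology
    {V : Type} (H : Set (Finset V)) {I : Type} (A : I → Set (Finset V))
    (hA : ∀ i, A i ⊆ H) (hopen : ∀ i, IsOpenD H (A i)) :
    IsOpenD H (⋂ i, A i) ∧ IsOpenD H (⋃ i, A i) ∧
      IsOpenD H (∅ : Set (Finset V)) ∧ IsOpenD H H := by
  have key : ∀ (B : Set (Finset V)), (∀ σ ∈ B, ∀ τ ∈ H, τ ∉ B → ¬ σ ⊆ τ ∨ ¬ σ.Nonempty) →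
      IsOpenD H B := by
    intro B h
    ext σ
    simp only [Set.mem_inter_iff, Set.mem_empty_iff_false, iff_false, not_and]
    intro hσB hσΔ
    obtain ⟨hne, τ, ⟨hτH, hτB⟩, hsub⟩ := hσΔ
    rcases h σ hσB τ hτH hτB with h1 | h1
    · exact h1 hsub
    · exact h1 hne
  have hop : ∀ i, ∀ σ ∈ A i, ∀ τ ∈ H, τ ∉ A i → ¬ σ ⊆ τ ∨ ¬ σ.Nonempty := by
    intro i σ hσ τ hτH hτA
    by_contra hc
    push_neg at hc
    have : σ ∈ A i ∩ assocSC (H \ A i) :=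
      ⟨hσ, hc.2, τ, ⟨hτH, hτA⟩, hc.1⟩
    rw [hopen i] at this
    exact this
  refine ⟨?_, ?_, ?_, ?_⟩
  · apply key
    intro σ hσ τ hτH hτ
    rw [Set.mem_iInter] at hσ hτ
    push_neg at hτ
    obtain ⟨i, hi⟩ := hτ
    exact hop i σ (hσ i) τ hτH hi
  · apply key
    intro σ hσ τ hτH hτ
    rw [Set.mem_iUnion] at hσ
    obtain ⟨i, hi⟩ := hσ
    exact hop i σ hi τ hτH (fun h => hτ (Set.mem_iUnion.mpr ⟨i, h⟩))
  · apply key; intro σ hσ; exact absurd hσ (Set.notMem_empty σ)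
  · apply key; intro σ _ τ hτH hτ; exact absurd hτH hτ
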